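/- If z ∈ Ĩ_n and both i and i+1 are fixed points of z, then z·s_i is again an involution in S̃_n, and ℓ'(z s_i) = ℓ'(z) + 1, where ℓ'(y) is the number of 2-cycles of y up to translation by n. -/

import Mathlib

open Finset

/-- `w` is an element of the affine symmetric group `S̃_n`: a bijection `ℤ → ℤ` with
`w (i + n) = w i + n` for all `i` and `∑_{i=1}^n w i = n (n+1)/2`. -/
def IsAffine (n : ℕ) (w : Equiv.Perm ℤ) : Prop :=
  (∀ i : ℤ, w (i + n) = w i + n) ∧ ∑ i ∈ Finset.Icc (1 : ℤ) (n : ℤ), (w i - i) = 0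

/-- The Coxeter length of `w ∈ S̃_n`: the number of inversions `(i, j)`, `i < j`,
`w i > w j`, counted up to the equivalence `(i,j) ∼ (i+n, j+n)` (representatives with
`i ∈ [n]`). -/
noncomputable def affLen (n : ℕ) (w : Equiv.Perm ℤ) : ℕ :=
  Nat.card {p : ℤ × ℤ // 1 ≤ p.1 ∧ p.1 ≤ (n : ℤ) ∧ p.1 < p.2 ∧ w p.2 < w p.1}

/-- The absolute length of an involution `z ∈ Ĩ_n`: the number of 2-cycles
`(i, j)` with `i < j = z i`, counted up to the equivalence `(i,j) ∼ (i+n, j+n)`. -/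
noncomputable def absLen (n : ℕ) (z : Equiv.Perm ℤ) : ℕ :=
  Nat.card {p : ℤ × ℤ // 1 ≤ p.1 ∧ p.1 ≤ (n : ℤ) ∧ p.1 < p.2 ∧ z p.1 = p.2}

/-- The underlying function of the reflection `t_{i j}`: it sends `i + m n ↦ j + m n` and
`j + m n ↦ i + m n` for all `m`, fixing everything else. -/
def tFun (n : ℕ) (i j x : ℤ) : ℤ :=
  if (n : ℤ) ∣ x - i then x + (j - i) else if (n : ℤ) ∣ x - j then x - (j - i) else x

theorem tFun_comp (n : ℕ) (i j x : ℤ) : tFun n j i (tFun n i j x) = x := by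
  unfold tFun
  by_cases h1 : (n : ℤ) ∣ x - i
  · rw [if_pos h1]
    have c1 : (n : ℤ) ∣ x + (j - i) - j := by
      have e : x + (j - i) - j = x - i := by ring
      rw [e]; exact h1
    rw [if_pos c1]; ring
  · rw [if_neg h1]
    by_cases h2 : (n : ℤ) ∣ x - j
    · rw [if_pos h2]
      have c1 : ¬ (n : ℤ) ∣ x - (j - i) - j := by
        intro hc
        apply h1
        have e : x - i = 2 * (x - j) - (x - (j - i) - j) := by ring
        rw [e]
        exact dvd_sub (Dvd.dvd.mul_left h2 2) hc
      have c2 : (n : ℤ) ∣ x - (j - i) - i := by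
        have e : x - (j - i) - i = x - j := by ring
        rw [e]; exact h2
      rw [if_neg c1, if_pos c2]; ring
    · simp only [if_neg h1, if_neg h2]

/-- The reflection `t_{i j} ∈ S̃_n`. -/
def tPerm (n : ℕ) (i j : ℤ) : Equiv.Perm ℤ :=
  ⟨tFun n i j, tFun n j i, fun x => tFun_comp n i j x, fun x => tFun_comp n j i x⟩

/-- The simple generator `s_i = t_{i, i+1} ∈ S̃_n`. -/
def sPerm (n : ℕ) (i : ℤ) : Equiv.Perm ℤ := tPerm n i (i + 1)

section AuxLemmas

lemma sPerm_apply (n : ℕ) (i x : ℤ) : sPerm n i x =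
    if (n : ℤ) ∣ x - i then x + 1 else if (n : ℤ) ∣ x - (i + 1) then x - 1 else x := by
  show tFun n i (i + 1) x = _
  unfold tFun
  norm_num

lemma shift_all (n : ℕ) (w : Equiv.Perm ℤ) (hw : ∀ i : ℤ, w (i + n) = w i + n)
    (m x : ℤ) : w (x + m * n) = w x + m * n := by
  induction m using Int.induction_on with
  | zero => simp
  | succ k ih =>
      have h := hw (x + (k : ℤ) * n)
      have e : x + ((k : ℤ) + 1) * n = x + (k : ℤ) * n + n := by ring
      rw [e, h, ih]; ring
  | pred k ih =>
      have h := hw (x + (-(k : ℤ) - 1) * n)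
      have e : x + (-(k : ℤ) - 1) * n + n = x + (-(k : ℤ)) * n := by ring
      rw [e] at h
      have : w (x + (-(k : ℤ) - 1) * n) = w (x + (-(k : ℤ)) * n) - n := by omega
      rw [this, ih]; ring

lemma zfix (n : ℕ) (z : Equiv.Perm ℤ) (hz : ∀ i : ℤ, z (i + n) = z i + n) {i x : ℤ}
    (hi : z i = i) (h : (n : ℤ) ∣ x - i) : z x = x := by
  obtain ⟨k, hk⟩ := h
  have e : x = i + k * n := by linarith
  rw [e, shift_all n z hz k i, hi]

lemma uniqRep (n : ℕ) (hn : 2 ≤ n) {x y : ℤ} (hx1 : 1 ≤ x) (hx2 : x ≤ (n : ℤ))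
    (hy1 : 1 ≤ y) (hy2 : y ≤ (n : ℤ)) (h : (n : ℤ) ∣ x - y) : x = y := by
  have h0 : x - y = 0 := Int.eq_zero_of_abs_lt_dvd h (abs_lt.mpr ⟨by omega, by omega⟩)
  omega

lemma card_eq_filter (n : ℕ) (w : Equiv.Perm ℤ) :
    Nat.card {p : ℤ × ℤ // 1 ≤ p.1 ∧ p.1 ≤ (n : ℤ) ∧ p.1 < p.2 ∧ w p.1 = p.2}
      = ((Finset.Icc (1 : ℤ) (n : ℤ)).filter (fun a => a < w a)).card := by
  classical
  have e : {p : ℤ × ℤ // 1 ≤ p.1 ∧ p.1 ≤ (n : ℤ) ∧ p.1 < p.2 ∧ w p.1 = p.2}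
      ≃ {a : ℤ // a ∈ (Finset.Icc (1 : ℤ) (n : ℤ)).filter (fun a => a < w a)} :=
    { toFun := fun p => ⟨p.1.1, by
        obtain ⟨h1, h2, h3, h4⟩ := p.2
        simp only [Finset.mem_filter, Finset.mem_Icc]
        exact ⟨⟨h1, h2⟩, h4 ▸ h3⟩⟩
      invFun := fun a => ⟨(a.1, w a.1), by
        have := a.2
        simp only [Finset.mem_filter, Finset.mem_Icc] at this
        exact ⟨this.1.1, this.1.2, this.2, rfl⟩⟩
      left_inv := fun p => by
        obtain ⟨⟨x, y⟩, h1, h2, h3, h4⟩ := p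
        simp [h4]
      right_inv := fun a => rfl }
  rw [Nat.card_congr e, Nat.card_eq_finsetCard]

end AuxLemmas
/-- If `i` and `i+1` are fixed points of `z ∈ Ĩ_n`, then `z s_i` is again an involution in
`S̃_n` and `ℓ'(z s_i) = ℓ'(z) + 1`. -/
theorem absLen_mul_s (n : ℕ) (hn : 2 ≤ n) (z : Equiv.Perm ℤ)
    (hz : IsAffine n z) (hinv : ∀ x : ℤ, z (z x) = x) (i : ℤ)
    (h1 : z i = i) (h2 : z (i + 1) = i + 1) :
    IsAffine n (z * sPerm n i) ∧ (∀ x : ℤ, (z * sPerm n i) ((z * sPerm n i) x) = x) ∧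
      absLen n (z * sPerm n i) = absLen n z + 1 := by
  classical
  have hnpos : (0 : ℤ) < (n : ℤ) := by exact_mod_cast Nat.lt_of_lt_of_le Nat.zero_lt_two hn
  have hone : ¬ (n : ℤ) ∣ (1 : ℤ) := by
    intro h
    have := Int.le_of_dvd one_pos h
    omega
  -- z fixes everything congruent to i or i+1 mod n
  have hfix1 : ∀ x : ℤ, (n : ℤ) ∣ x - i → z x = x := fun x h => zfix n z hz.1 h1 h
  have hfix2 : ∀ x : ℤ, (n : ℤ) ∣ x - (i + 1) → z x = x := fun x h => zfix n z hz.1 h2 h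
  -- no overlap between the two classes
  have hno : ∀ x : ℤ, (n : ℤ) ∣ x - i → ¬ (n : ℤ) ∣ x - (i + 1) := by
    intro x hx hx'
    exact hone (by have := dvd_sub hx hx'; simpa using this)
  -- z preserves non-membership in the classes
  have hnd1 : ∀ x : ℤ, ¬ (n : ℤ) ∣ x - i → ¬ (n : ℤ) ∣ z x - i := by
    intro x hx hc
    have : z (z x) = z x := hfix1 (z x) hc
    rw [hinv x] at this
    exact hx (this ▸ hc)
  have hnd2 : ∀ x : ℤ, ¬ (n : ℤ) ∣ x - (i + 1) → ¬ (n : ℤ) ∣ z x - (i + 1) := by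
    intro x hx hc
    have : z (z x) = z x := hfix2 (z x) hc
    rw [hinv x] at this
    exact hx (this ▸ hc)
  -- explicit values of w = z * s
  have hw1 : ∀ x : ℤ, (n : ℤ) ∣ x - i → (z * sPerm n i) x = x + 1 := by
    intro x hx
    rw [Equiv.Perm.mul_apply, sPerm_apply, if_pos hx]
    have hd : (n : ℤ) ∣ x + 1 - (i + 1) := by
      have e : x + 1 - (i + 1) = x - i := by ring
      rw [e]; exact hx
    exact hfix2 (x + 1) hd
  have hw2 : ∀ x : ℤ, (n : ℤ) ∣ x - (i + 1) → (z * sPerm n i) x = x - 1 := by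
    intro x hx
    have hx' : ¬ (n : ℤ) ∣ x - i := by
      intro hc; exact hno x hc hx
    rw [Equiv.Perm.mul_apply, sPerm_apply, if_neg hx', if_pos hx]
    have hd : (n : ℤ) ∣ x - 1 - i := by
      have e : x - 1 - i = x - (i + 1) := by ring
      rw [e]; exact hx
    exact hfix1 (x - 1) hd
  have hw3 : ∀ x : ℤ, ¬ (n : ℤ) ∣ x - i → ¬ (n : ℤ) ∣ x - (i + 1) →
      (z * sPerm n i) x = z x := by
    intro x hx hx'
    rw [Equiv.Perm.mul_apply, sPerm_apply, if_neg hx, if_neg hx']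
  -- the canonical representatives
  set a : ℤ := (i - 1) % (n : ℤ) + 1 with ha_def
  set b : ℤ := i % (n : ℤ) + 1 with hb_def
  have ha1 : 1 ≤ a := by
    have := Int.emod_nonneg (i - 1) (ne_of_gt hnpos)
    omega
  have ha2 : a ≤ (n : ℤ) := by
    have := Int.emod_lt_of_pos (i - 1) hnpos
    omega
  have hadvd : (n : ℤ) ∣ a - i := by
    have e : a - i = -((n : ℤ) * ((i - 1) / n)) := by
      rw [ha_def, Int.emod_def]; ring
    rw [e]
    exact dvd_neg.mpr (dvd_mul_right _ _)
  have hb1 : 1 ≤ b := by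
    have := Int.emod_nonneg i (ne_of_gt hnpos)
    omega
  have hb2 : b ≤ (n : ℤ) := by
    have := Int.emod_lt_of_pos i hnpos
    omega
  have hbdvd : (n : ℤ) ∣ b - (i + 1) := by
    have e : b - (i + 1) = -((n : ℤ) * (i / n)) := by
      rw [hb_def, Int.emod_def]; ring
    rw [e]
    exact dvd_neg.mpr (dvd_mul_right _ _)
  have hab : a ≠ b := by
    intro h
    exact hno a hadvd (h ▸ hbdvd)
  refine ⟨⟨?_, ?_⟩, ?_, ?_⟩
  · -- translation property
    intro x
    have hs : sPerm n i (x + n) = sPerm n i x + n := by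
      rw [sPerm_apply, sPerm_apply]
      have e1 : ((n : ℤ) ∣ x + n - i) ↔ ((n : ℤ) ∣ x - i) := by
        rw [show x + (n : ℤ) - i = x - i + n by ring]; exact dvd_add_self_right
      have e2 : ((n : ℤ) ∣ x + n - (i + 1)) ↔ ((n : ℤ) ∣ x - (i + 1)) := by
        rw [show x + (n : ℤ) - (i + 1) = x - (i + 1) + n by ring]; exact dvd_add_self_right
      simp only [e1, e2]
      by_cases hx : (n : ℤ) ∣ x - i
      · rw [if_pos hx, if_pos hx]; ring
      · rw [if_neg hx, if_neg hx]
        by_cases hx' : (n : ℤ) ∣ x - (i + 1)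
        · rw [if_pos hx', if_pos hx']; ring
        · rw [if_neg hx', if_neg hx']
    rw [Equiv.Perm.mul_apply, hs, hz.1, ← Equiv.Perm.mul_apply]
  · -- sum condition
    have hpt : ∀ x : ℤ, (z * sPerm n i) x - x = (z x - x) + (sPerm n i x - x) := by
      intro x
      by_cases hx : (n : ℤ) ∣ x - i
      · rw [hw1 x hx, hfix1 x hx, sPerm_apply, if_pos hx]; ring
      · by_cases hx' : (n : ℤ) ∣ x - (i + 1)
        · rw [hw2 x hx', hfix2 x hx', sPerm_apply, if_neg hx, if_pos hx']; ring
        · rw [hw3 x hx hx', sPerm_apply, if_neg hx, if_neg hx']; ring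
    calc ∑ x ∈ Finset.Icc (1 : ℤ) (n : ℤ), ((z * sPerm n i) x - x)
        = ∑ x ∈ Finset.Icc (1 : ℤ) (n : ℤ), ((z x - x) + (sPerm n i x - x)) :=
          Finset.sum_congr rfl (fun x _ => hpt x)
      _ = (∑ x ∈ Finset.Icc (1 : ℤ) (n : ℤ), (z x - x))
            + ∑ x ∈ Finset.Icc (1 : ℤ) (n : ℤ), (sPerm n i x - x) :=
          Finset.sum_add_distrib
      _ = ∑ x ∈ Finset.Icc (1 : ℤ) (n : ℤ), (sPerm n i x - x) := by rw [hz.2, zero_add]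
      _ = 0 := by
          have hma : a ∈ Finset.Icc (1 : ℤ) (n : ℤ) := Finset.mem_Icc.mpr ⟨ha1, ha2⟩
          have hmb : b ∈ (Finset.Icc (1 : ℤ) (n : ℤ)).erase a :=
            Finset.mem_erase.mpr ⟨fun h => hab h.symm, Finset.mem_Icc.mpr ⟨hb1, hb2⟩⟩
          rw [← Finset.add_sum_erase _ _ hma, ← Finset.add_sum_erase _ _ hmb]
          have hga : sPerm n i a - a = 1 := by rw [sPerm_apply, if_pos hadvd]; ring
          have hgb : sPerm n i b - b = -1 := by
            rw [sPerm_apply, if_neg (fun h => hno b h hbdvd), if_pos hbdvd]; ring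
          have hrest : ∑ x ∈ ((Finset.Icc (1 : ℤ) (n : ℤ)).erase a).erase b,
              (sPerm n i x - x) = 0 := by
            apply Finset.sum_eq_zero
            intro x hx
            have hxb := (Finset.mem_erase.mp hx).1
            have hx' := (Finset.mem_erase.mp hx).2
            have hxa := (Finset.mem_erase.mp hx').1
            have hxI := Finset.mem_Icc.mp (Finset.mem_erase.mp hx').2
            have hndx : ¬ (n : ℤ) ∣ x - i := by
              intro hc
              exact hxa (uniqRep n hn hxI.1 hxI.2 ha1 ha2
                (by have e : x - a = (x - i) - (a - i) := by ring
                    rw [e]; exact dvd_sub hc hadvd))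
            have hndx' : ¬ (n : ℤ) ∣ x - (i + 1) := by
              intro hc
              exact hxb (uniqRep n hn hxI.1 hxI.2 hb1 hb2
                (by have e : x - b = (x - (i + 1)) - (b - (i + 1)) := by ring
                    rw [e]; exact dvd_sub hc hbdvd))
            rw [sPerm_apply, if_neg hndx, if_neg hndx']; ring
          rw [hga, hgb, hrest]
          norm_num
  · -- involution
    intro x
    by_cases hx : (n : ℤ) ∣ x - i
    · have hd : (n : ℤ) ∣ x + 1 - (i + 1) := by
        have e : x + 1 - (i + 1) = x - i := by ring
        rw [e]; exact hx
      rw [hw1 x hx, hw2 (x + 1) hd]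
      ring
    · by_cases hx' : (n : ℤ) ∣ x - (i + 1)
      · have hd : (n : ℤ) ∣ x - 1 - i := by
          have e : x - 1 - i = x - (i + 1) := by ring
          rw [e]; exact hx'
        rw [hw2 x hx', hw1 (x - 1) hd]
        ring
      · rw [hw3 x hx hx', hw3 (z x) (hnd1 x hx) (hnd2 x hx'), hinv]
  · -- length
    unfold absLen
    rw [card_eq_filter, card_eq_filter]
    have hfilt : (Finset.Icc (1 : ℤ) (n : ℤ)).filter (fun x => x < (z * sPerm n i) x)
        = insert a ((Finset.Icc (1 : ℤ) (n : ℤ)).filter (fun x => x < z x)) := by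
      ext x
      simp only [Finset.mem_filter, Finset.mem_insert, Finset.mem_Icc]
      constructor
      · rintro ⟨⟨hxl, hxr⟩, hlt⟩
        by_cases hx : (n : ℤ) ∣ x - i
        · left
          exact uniqRep n hn hxl hxr ha1 ha2
            (by have e : x - a = (x - i) - (a - i) := by ring
                rw [e]; exact dvd_sub hx hadvd)
        · by_cases hx' : (n : ℤ) ∣ x - (i + 1)
          · rw [hw2 x hx'] at hlt; omega
          · rw [hw3 x hx hx'] at hlt
            exact Or.inr ⟨⟨hxl, hxr⟩, hlt⟩
      · rintro (rfl | ⟨⟨hxl, hxr⟩, hlt⟩)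
        · refine ⟨⟨ha1, ha2⟩, ?_⟩
          rw [hw1 a hadvd]; omega
        · refine ⟨⟨hxl, hxr⟩, ?_⟩
          by_cases hx : (n : ℤ) ∣ x - i
          · rw [hfix1 x hx] at hlt; omega
          · by_cases hx' : (n : ℤ) ∣ x - (i + 1)
            · rw [hfix2 x hx'] at hlt; omega
            · rw [hw3 x hx hx']; exact hlt
    rw [hfilt, Finset.card_insert_of_notMem]
    intro hc
    have := (Finset.mem_filter.mp hc).2
    rw [hfix1 a hadvd] at this
    omega
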